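/- Every attractor Γ of a string S of length n satisfies d_k(S) ≤ k·|Γ| for every k ∈ {1,...,n}; consequently, every string S satisfies δ(S) ≤ γ(S). -/

import Mathlib

def substrings {α : Type} [DecidableEq α] (S : List α) (k : ℕ) : Finset (List α) :=
  ((Finset.range (S.length + 1)).image (fun i => (S.drop i).take k)).filter
    (fun t => t.length = k)

def subCount {α : Type} [DecidableEq α] (S : List α) (k : ℕ) : ℕ :=
  (substrings S k).card

def delta {α : Type} [DecidableEq α] (S : List α) : ℚ :=
  if h : S = [] then 0
  else
    (Finset.Icc 1 S.length).sup'
      (Finset.nonempty_Icc.mpr (Nat.one_le_iff_ne_zero.mpr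
        (fun h0 => h (List.length_eq_zero_iff.mp h0))))
      (fun k => (subCount S k : ℚ) / k)

def IsAttractor {α : Type} (S : List α) (Γ : Finset ℕ) : Prop :=
  (∀ p ∈ Γ, 1 ≤ p ∧ p ≤ S.length) ∧
  ∀ i j : ℕ, 1 ≤ i → i ≤ j → j ≤ S.length →
    ∃ i' j' : ℕ, 1 ≤ i' ∧ i' ≤ j' ∧ j' ≤ S.length ∧
      (S.drop (i' - 1)).take (j' - i' + 1) = (S.drop (i - 1)).take (j - i + 1) ∧
      ∃ p ∈ Γ, i' ≤ p ∧ p ≤ j'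

noncomputable def gamma {α : Type} (S : List α) : ℕ :=
  sInf { m | ∃ Γ : Finset ℕ, IsAttractor S Γ ∧ Γ.card = m }

lemma key {α : Type} [DecidableEq α] (S : List α) (Γ : Finset ℕ) (hΓ : IsAttractor S Γ)
    (k : ℕ) (hk : k ∈ Finset.Icc 1 S.length) : subCount S k ≤ k * Γ.card := by
  obtain ⟨hk1, hkn⟩ := Finset.mem_Icc.mp hk
  have hsub : substrings S k ⊆
      (Γ ×ˢ Finset.range k).image (fun q : ℕ × ℕ => (S.drop (q.1 - 1 - q.2)).take k) := by
    intro t ht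
    simp only [substrings, Finset.mem_filter, Finset.mem_image, Finset.mem_range] at ht
    obtain ⟨⟨i, hi, hti⟩, htlen⟩ := ht
    have hik : i + k ≤ S.length := by
      rw [← hti] at htlen
      simp only [List.length_take, List.length_drop] at htlen
      omega
    obtain ⟨i', j', h1, h2, h3, heq, p, hp, hpi, hpj⟩ :=
      hΓ.2 (i + 1) (i + k) (by omega) (by omega) (by omega)
    have hr : (S.drop (i + 1 - 1)).take (i + k - (i + 1) + 1) = (S.drop i).take k := by
      congr 1 <;> omega
    rw [hr, hti] at heq
    have hlen : j' - i' + 1 = k := by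
      have h := congrArg List.length heq
      simp only [List.length_take, List.length_drop] at h
      omega
    refine Finset.mem_image.mpr ⟨(p, p - i'),
      Finset.mem_product.mpr ⟨hp, Finset.mem_range.mpr (by omega)⟩, ?_⟩
    have hpi' : p - 1 - (p - i') = i' - 1 := by omega
    simpa [hpi', hlen] using heq
  calc subCount S k ≤ ((Γ ×ˢ Finset.range k).image
        (fun q : ℕ × ℕ => (S.drop (q.1 - 1 - q.2)).take k)).card := Finset.card_le_card hsub
    _ ≤ (Γ ×ˢ Finset.range k).card := Finset.card_image_le
    _ = Γ.card * k := by rw [Finset.card_product, Finset.card_range]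
    _ = k * Γ.card := Nat.mul_comm _ _

theorem subCount_le_of_attractor_and_delta_le_gamma
    {α : Type} [DecidableEq α] (S : List α) :
    (∀ Γ : Finset ℕ, IsAttractor S Γ →
      ∀ k ∈ Finset.Icc 1 S.length, subCount S k ≤ k * Γ.card) ∧
    delta S ≤ (gamma S : ℚ) := by
  refine ⟨fun Γ hΓ k hk => key S Γ hΓ k hk, ?_⟩
  by_cases h : S = []
  · simp [delta, h]
  · have hne : { m | ∃ Γ : Finset ℕ, IsAttractor S Γ ∧ Γ.card = m }.Nonempty := by
      refine ⟨(Finset.Icc 1 S.length).card, Finset.Icc 1 S.length, ⟨?_, ?_⟩, rfl⟩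
      · intro p hp; exact Finset.mem_Icc.mp hp
      · intro i j hi hij hj
        exact ⟨i, j, hi, hij, hj, rfl, i, Finset.mem_Icc.mpr ⟨hi, le_trans hij hj⟩, le_refl i, hij⟩
    obtain ⟨Γ₀, hΓ₀, hcard⟩ := Nat.sInf_mem hne
    rw [delta, dif_neg h]
    apply Finset.sup'_le
    intro k hk
    obtain ⟨hk1, hkn⟩ := Finset.mem_Icc.mp hk
    have hd : subCount S k ≤ k * gamma S := by
      rw [gamma, ← hcard]; exact key S Γ₀ hΓ₀ k hk
    have hkpos : (0 : ℚ) < k := by exact_mod_cast hk1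
    rw [div_le_iff₀ hkpos]
    calc (subCount S k : ℚ) ≤ (k * gamma S : ℕ) := by exact_mod_cast hd
      _ = (gamma S : ℚ) * k := by push_cast; ring
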